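/- arXiv:2010.11357 — 4 statements merged into one kernel-verified Lean document; each statement's English description precedes it below -/
import Mathlib

section
/- Let g be simply-laced with diagram automorphism group generated by τ of order m acting on the Cartan subalgebra h, and let ι: X_*(T) → (h^σ)^∨ be the map ι(λ)(h) = (λ,h) given by the normalized Killing form (θ^∨,θ^∨)=2, where σ is a standard automorphism. Then for every vertex i of the Dynkin diagram, ι(ω̌_i) = λ_{η(i)}, i.e. ι sends the fundamental coweight ω̌_i of g to the fundamental weight of g^σ associated to the orbit of i. -/
/-!
STATEMENT 2: Let `g` be simply laced with standard automorphism `σ` acting on the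
Cartan subalgebra `h`, and let `ι : X_*(T) → (h^σ)^∨` be `ι(λ)(x) = (λ, x)` for the
normalized Killing form `B` (normalized so that `(x, α̌_a) = α_a(x)`, equivalently
`(ω̌_i, α̌_a) = δ_{ia}`, the simply-laced identification).  Then for every vertex `i`
of the Dynkin diagram, `ι(ω̌_i) = λ_{η(i)}`: the functional `B(ω̌_i, ·)` restricted to
the fixed space `h^σ` agrees with the fundamental weight `λ_{η(i)}` of `g^σ`, i.e. the
functional `Λ (η i)` characterized by `Λ_j(β̌_{j'}) = δ_{j j'}` on the simple coroots
`β̌_j = Σ_{i ∈ η⁻¹(j)} α̌_i` of `g^σ` (which span `h^σ`).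

Here `I` indexes the Dynkin diagram of `g`, `I_σ` the folded diagram, `η : I → I_σ`
the folding map, and `σ` permutes the simple coroots `α̌_i` along the fibers of `η`
via a permutation `p`.
-/

theorem stmt2 {I Iσ : Type*} [Fintype I] [DecidableEq I] [Fintype Iσ] [DecidableEq Iσ]
    {h : Type*} [AddCommGroup h] [Module ℚ h]
    -- the normalized Killing form on `h`
    (B : h →ₗ[ℚ] h →ₗ[ℚ] ℚ)
    -- the standard automorphism acting on `h`
    (σ : h ≃ₗ[ℚ] h)
    -- simple coroots and fundamental coweights of `g`
    (αv ωv : I → h)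
    -- the folding map `η`
    (η : I → Iσ) (hη : Function.Surjective η)
    -- `σ` permutes the simple coroots along the fibers of `η`
    (p : Equiv.Perm I) (hσα : ∀ i, σ (αv i) = αv (p i)) (hpη : ∀ i, η (p i) = η i)
    -- the simply-laced normalization of the Killing form: `(ω̌_i, α̌_a) = δ_{ia}`
    (hB : ∀ i a, B (ωv i) (αv a) = if a = i then 1 else 0)
    -- the fundamental weights `λ_j` of `g^σ`, as functionals on `h` restricting to
    -- the fundamental weights on `h^σ`: `λ_j (β̌_{j'}) = δ_{j j'}` where
    -- `β̌_j = Σ_{i ∈ η⁻¹(j)} α̌_i` are the simple coroots of `g^σ`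
    (Λ : Iσ → (h →ₗ[ℚ] ℚ))
    (hΛ : ∀ j j' : Iσ,
      Λ j (∑ i ∈ Finset.univ.filter (fun i => η i = j'), αv i) = if j' = j then 1 else 0)
    -- the simple coroots `β̌_j` of `g^σ` span the fixed space `h^σ`
    (hspan : ∀ x : h, σ x = x →
      x ∈ Submodule.span ℚ
        (Set.range fun j : Iσ => ∑ i ∈ Finset.univ.filter (fun i => η i = j), αv i)) :
    -- conclusion: `ι(ω̌_i) = λ_{η(i)}` as functionals on `h^σ`
    ∀ (i : I) (x : h), σ x = x → B (ωv i) x = Λ (η i) x := by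
  intro i x hx
  have hmem := hspan x hx
  have hker : Submodule.span ℚ
      (Set.range fun j : Iσ => ∑ a ∈ Finset.univ.filter (fun a => η a = j), αv a)
      ≤ LinearMap.ker (B (ωv i) - Λ (η i)) := by
    rw [Submodule.span_le]
    rintro _ ⟨j, rfl⟩
    simp only [SetLike.mem_coe, LinearMap.mem_ker, LinearMap.sub_apply, sub_eq_zero]
    rw [hΛ, map_sum]
    simp only [hB]
    rw [Finset.sum_ite_eq' (Finset.univ.filter (fun a => η a = j)) i (fun _ => (1 : ℚ))]
    simp [eq_comm]
  have := hker hmem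
  simpa [sub_eq_zero] using this
end

section
/- Let (g,m) = (A_{2ℓ}, 4) with σ the standard order-4 automorphism, and γ_j ∈ X_*(T)_σ the image of the simple coroot α̌_i for j = η(i). Then ι(γ_j) = β_j for j ≠ ℓ and ι(γ_ℓ) = (1/2)β_ℓ, where β_j are the simple roots of g^σ ≅ C_ℓ. -/
/-!
STATEMENT 3: Let `(g, m) = (A_{2ℓ}, 4)` with `σ` the standard order-4 automorphism of
`g = sl_{2ℓ+1}`, `G = PGL_{2ℓ+1}`, and `γ_j ∈ X_*(T)_σ` the image of the simple
coroot `α̌_i` for `j = η(i)`.  Then `ι(γ_j) = β_j` for `j ≠ ℓ` and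
`ι(γ_ℓ) = (1/2) β_ℓ`, where `β_j = α_j|_{h^σ}` (`j < ℓ`) and `β_ℓ = 2 α_ℓ|_{h^σ}`
are the simple roots of `g^σ ≅ C_ℓ`.

Concretely: the Cartan subalgebra of `sl_{2ℓ+1}` is the sum-zero subspace of
`ℚ^{2ℓ+1}` (coordinates `y 0, …, y (2ℓ)`), `σ` acts on it by `y_k ↦ −y_{2ℓ−k}`, the
normalized Killing form is the trace form, `α̌_a = e_{a−1} − e_a` (1-based
`a = 1, …, 2ℓ`), `α_a(y) = y_{a−1} − y_a`, and `η(a) = min(a, 2ℓ+1−a)`.  The claim: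
for every `y ∈ h^σ` and every representative `a` of the `η`-fiber of `j`,
`(α̌_a, y) = β_{η(a)}(y)` if `η(a) ≠ ℓ`, and `(α̌_a, y) = (1/2) β_ℓ(y)` if `η(a) = ℓ`
(the pairing `(α̌_a, y)` is independent of the representative, so `ι` descends to the
coinvariants `X_*(T)_σ`).
-/

/-- The trace-form pairing `(α̌_a, y)` of the simple coroot `α̌_a = e_{a−1} − e_a`
(1-based `a`) with `y ∈ h`. -/
def corootPair (ℓ : ℕ) (a : ℕ) (y : ℕ → ℚ) : ℚ :=
  ∑ k ∈ Finset.range (2 * ℓ + 1),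
    ((if k = a - 1 then 1 else 0) - (if k = a then 1 else 0)) * y k

/-- The simple root `β_j` of `g^σ ≅ C_ℓ` evaluated on `y ∈ h^σ` (1-based `j ≤ ℓ`):
`β_j = α_j|_{h^σ}` for `j < ℓ`, and `β_ℓ = 2 α_ℓ|_{h^σ}`. -/
def βC (ℓ j : ℕ) (y : ℕ → ℚ) : ℚ :=
  if j = ℓ then 2 * (y (ℓ - 1) - y ℓ) else y (j - 1) - y j


lemma corootPair_eq (ℓ a : ℕ) (ha1 : 1 ≤ a) (ha2 : a ≤ 2 * ℓ) (y : ℕ → ℚ) :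
    corootPair ℓ a y = y (a - 1) - y a := by
  unfold corootPair
  simp only [sub_mul, Finset.sum_sub_distrib, ite_mul, one_mul, zero_mul,
    Finset.sum_ite_eq', Finset.mem_range]
  rw [if_pos (by omega), if_pos (by omega)]

theorem stmt3 (ℓ : ℕ) (hℓ : 1 ≤ ℓ) (y : ℕ → ℚ)
    -- `y` lies in the Cartan subalgebra of `sl_{2ℓ+1}` …
    (hsum : ∑ k ∈ Finset.range (2 * ℓ + 1), y k = 0)
    -- … and is fixed by `σ` (which acts by `y_k ↦ −y_{2ℓ−k}`)
    (hfix : ∀ k ≤ 2 * ℓ, y k = -y (2 * ℓ - k)) :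
    ∀ a : ℕ, 1 ≤ a → a ≤ 2 * ℓ →
      corootPair ℓ a y =
        if a = ℓ ∨ a = ℓ + 1 then (1 / 2 : ℚ) * βC ℓ ℓ y
        else βC ℓ (min a (2 * ℓ + 1 - a)) y := by
  intro a ha1 ha2
  rw [corootPair_eq ℓ a ha1 ha2]
  have hmid : y ℓ = 0 := by
    have := hfix ℓ (by omega)
    simp only [show 2 * ℓ - ℓ = ℓ by omega] at this
    linarith
  by_cases h : a = ℓ ∨ a = ℓ + 1
  · rw [if_pos h]
    unfold βC
    rw [if_pos rfl]
    rcases h with h | h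
    · subst h; ring
    · subst h
      have h1 := hfix (ℓ + 1) (by omega)
      simp only [show 2 * ℓ - (ℓ + 1) = ℓ - 1 by omega] at h1
      simp only [show ℓ + 1 - 1 = ℓ from rfl]
      rw [h1, hmid]; ring
  · rw [if_neg h]
    push_neg at h
    unfold βC
    rcases Nat.lt_or_ge a ℓ with hlt | hge
    · rw [min_eq_left (by omega), if_neg (by omega)]
    · have hgt : ℓ + 1 < a := by omega
      rw [min_eq_right (by omega), if_neg (by omega)]
      have h1 := hfix (a - 1) (by omega)
      have h2 := hfix a (by omega)
      rw [show 2 * ℓ - (a - 1) = 2 * ℓ + 1 - a by omega] at h1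
      rw [show 2 * ℓ + 1 - a - 1 = 2 * ℓ - a by omega]
      rw [h1, h2]; ring
end

section
/- In the root system of type E_6 (Bourbaki labelling), ω_4 − ω_2 = α_1 + α_2 + 2α_3 + 3α_4 + 2α_5 + α_6 and this element is a positive root; moreover, together with the highest root θ = α_1 + 2α_2 + 2α_3 + 3α_4 + 2α_5 + α_6, the set {α_1, α_3, α_4, α_5, θ, −(ω_4−ω_2)} forms a system of simple roots for E_6. -/
/-!
STATEMENT 8: In the root system of type `E₆` (Bourbaki labelling),
`ω₄ − ω₂ = α₁ + α₂ + 2α₃ + 3α₄ + 2α₅ + α₆`, and this element is a positive root;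
moreover, together with the highest root `θ = α₁ + 2α₂ + 2α₃ + 3α₄ + 2α₅ + α₆`,
the set `{α₁, α₃, α₄, α₅, θ, −(ω₄ − ω₂)}` forms a system of simple roots for `E₆`.

We work in the weight lattice of `E₆` in coordinates with respect to the fundamental
weights `ω₁, …, ω₆` (0-indexed), so that the simple root `α_{j+1}` is given by the
`j`-th column of the Cartan matrix, and roots are the Weyl group orbit of simple roots.
-/

/-- The Cartan matrix of type `E₆` (Bourbaki labelling, 0-indexed). -/
def cartanE6 : Matrix (Fin 6) (Fin 6) ℤ :=
  !![2, 0, -1, 0, 0, 0;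
     0, 2, 0, -1, 0, 0;
     -1, 0, 2, -1, 0, 0;
     0, -1, -1, 2, -1, 0;
     0, 0, 0, -1, 2, -1;
     0, 0, 0, 0, -1, 2]

/-- The simple root `α_{j+1}` in fundamental-weight coordinates. -/
def rt (j : Fin 6) : Fin 6 → ℤ := fun i => cartanE6 i j

/-- The fundamental weight `ω_{i+1}` in fundamental-weight coordinates. -/
def fw (i : Fin 6) : Fin 6 → ℤ := fun j => if j = i then 1 else 0

/-- The simple reflection `s_{i+1}` acting on the weight lattice, as a self-map:
`s_i λ = λ − ⟨λ, α̌_i⟩ α_i`, and `⟨λ, α̌_i⟩` is the `i`-th fundamental-weight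
coordinate of `λ`. -/
def srefl (i : Fin 6) : Function.End (Fin 6 → ℤ) := fun c => c - c i • rt i

/-- `v` is a root iff it lies in the Weyl group orbit of a simple root. -/
def IsRoot (v : Fin 6 → ℤ) : Prop :=
  ∃ f ∈ Submonoid.closure (Set.range srefl), ∃ k, v = f (rt k)

/-- `v` is a positive root iff it is a root which is a nonnegative integral combination
of the simple roots. -/
def IsPositiveRoot (v : Fin 6 → ℤ) : Prop :=
  IsRoot v ∧ ∃ n : Fin 6 → ℕ, v = ∑ j, (n j : ℤ) • rt j

/-- A system of simple roots (a base): a linearly independent family such that every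
root is a nonnegative or nonpositive integral combination of its members. -/
def IsBase (Δ : Fin 6 → (Fin 6 → ℤ)) : Prop :=
  (LinearIndependent ℚ fun k => fun i => ((Δ k i : ℤ) : ℚ)) ∧
    ∀ v, IsRoot v →
      (∃ n : Fin 6 → ℕ, v = ∑ j, (n j : ℤ) • Δ j) ∨
      (∃ n : Fin 6 → ℕ, v = -∑ j, (n j : ℤ) • Δ j)

/-- `β = ω₄ − ω₂`. -/
def βE6 : Fin 6 → ℤ := fw 3 - fw 1

/-- The highest root `θ = α₁ + 2α₂ + 2α₃ + 3α₄ + 2α₅ + α₆`. -/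
def θE6 : Fin 6 → ℤ :=
  rt 0 + 2 • rt 1 + 2 • rt 2 + 3 • rt 3 + 2 • rt 4 + rt 5

def rootsV : Fin 72 → (Fin 6 → ℤ) :=
  ![![-2, 0, 1, 0, 0, 0],
    ![-1, -1, 0, 0, 1, 0],
    ![-1, -1, 0, 1, -1, 1],
    ![-1, -1, 0, 1, 0, -1],
    ![-1, -1, 1, 0, 0, 1],
    ![-1, -1, 1, 0, 1, -1],
    ![-1, -1, 1, 1, -1, 0],
    ![-1, 0, -1, 1, 0, 0],
    ![-1, 0, 0, 0, 1, 0],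
    ![-1, 0, 0, 1, -1, 1],
    ![-1, 0, 0, 1, 0, -1],
    ![-1, 0, 1, -1, 0, 1],
    ![-1, 0, 1, -1, 1, -1],
    ![-1, 0, 1, 0, -1, 0],
    ![-1, 0, 2, -1, 0, 0],
    ![-1, 1, 0, -1, 1, 0],
    ![-1, 1, 0, 0, -1, 1],
    ![-1, 1, 0, 0, 0, -1],
    ![-1, 1, 1, -1, 0, 1],
    ![-1, 1, 1, -1, 1, -1],
    ![-1, 1, 1, 0, -1, 0],
    ![0, -2, 0, 1, 0, 0],
    ![0, -1, -1, 1, 0, 1],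
    ![0, -1, -1, 1, 1, -1],
    ![0, -1, -1, 2, -1, 0],
    ![0, -1, 0, 0, 0, 0],
    ![0, -1, 0, 1, 0, 0],
    ![0, -1, 1, -1, 1, 0],
    ![0, -1, 1, 0, -1, 1],
    ![0, -1, 1, 0, 0, -1],
    ![0, 0, -1, 0, 0, 1],
    ![0, 0, -1, 0, 1, -1],
    ![0, 0, -1, 1, -1, 0],
    ![0, 0, 0, -1, 1, 1],
    ![0, 0, 0, -1, 2, -1],
    ![0, 0, 0, 0, -1, 2],
    ![0, 0, 0, 0, 1, -2],
    ![0, 0, 0, 1, -2, 1],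
    ![0, 0, 0, 1, -1, -1],
    ![0, 0, 1, -1, 1, 0],
    ![0, 0, 1, 0, -1, 1],
    ![0, 0, 1, 0, 0, -1],
    ![0, 1, -1, 0, 0, 1],
    ![0, 1, -1, 0, 1, -1],
    ![0, 1, -1, 1, -1, 0],
    ![0, 1, 0, -1, 0, 0],
    ![0, 1, 0, 0, 0, 0],
    ![0, 1, 1, -2, 1, 0],
    ![0, 1, 1, -1, -1, 1],
    ![0, 1, 1, -1, 0, -1],
    ![0, 2, 0, -1, 0, 0],
    ![1, -1, -1, 0, 1, 0],
    ![1, -1, -1, 1, -1, 1],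
    ![1, -1, -1, 1, 0, -1],
    ![1, -1, 0, 0, 0, 1],
    ![1, -1, 0, 0, 1, -1],
    ![1, -1, 0, 1, -1, 0],
    ![1, 0, -2, 1, 0, 0],
    ![1, 0, -1, 0, 1, 0],
    ![1, 0, -1, 1, -1, 1],
    ![1, 0, -1, 1, 0, -1],
    ![1, 0, 0, -1, 0, 1],
    ![1, 0, 0, -1, 1, -1],
    ![1, 0, 0, 0, -1, 0],
    ![1, 0, 1, -1, 0, 0],
    ![1, 1, -1, -1, 1, 0],
    ![1, 1, -1, 0, -1, 1],
    ![1, 1, -1, 0, 0, -1],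
    ![1, 1, 0, -1, 0, 1],
    ![1, 1, 0, -1, 1, -1],
    ![1, 1, 0, 0, -1, 0],
    ![2, 0, -1, 0, 0, 0]]

def coeffV : Fin 72 → (Fin 6 → ℕ) :=
  ![![1, 0, 0, 0, 0, 0],
    ![1, 1, 1, 0, 1, 1],
    ![1, 1, 1, 1, 1, 1],
    ![0, 1, 2, 1, 0, 1],
    ![1, 1, 2, 1, 1, 2],
    ![0, 1, 1, 1, 0, 0],
    ![0, 1, 1, 0, 0, 0],
    ![1, 1, 0, 0, 0, 0],
    ![1, 1, 1, 0, 0, 1],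
    ![1, 1, 1, 1, 0, 1],
    ![0, 1, 2, 1, 1, 1],
    ![1, 1, 2, 1, 1, 1],
    ![0, 1, 1, 1, 0, 1],
    ![0, 1, 1, 0, 0, 1],
    ![0, 1, 0, 0, 0, 0],
    ![1, 1, 1, 0, 0, 0],
    ![1, 1, 1, 1, 0, 0],
    ![0, 1, 2, 1, 1, 2],
    ![1, 1, 2, 1, 0, 1],
    ![0, 1, 1, 1, 1, 1],
    ![0, 1, 1, 0, 1, 1],
    ![0, 0, 0, 0, 1, 1],
    ![1, 2, 2, 1, 1, 2],
    ![0, 0, 1, 1, 0, 0],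
    ![0, 0, 1, 0, 0, 0],
    ![0, 0, 0, 0, 1, 0],
    ![0, 0, 0, 0, 0, 1],
    ![0, 0, 1, 0, 1, 1],
    ![0, 0, 1, 1, 1, 1],
    ![1, 2, 2, 1, 0, 1],
    ![1, 2, 2, 1, 1, 1],
    ![0, 0, 1, 1, 0, 1],
    ![0, 0, 1, 0, 0, 1],
    ![1, 2, 3, 1, 1, 2],
    ![0, 0, 0, 1, 0, 0],
    ![1, 2, 3, 2, 1, 2],
    ![1, 2, 3, 2, 1, 2],
    ![0, 0, 0, 1, 0, 0],
    ![1, 2, 3, 1, 1, 2],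
    ![0, 0, 1, 0, 0, 1],
    ![0, 0, 1, 1, 0, 1],
    ![1, 2, 2, 1, 1, 1],
    ![1, 2, 2, 1, 0, 1],
    ![0, 0, 1, 1, 1, 1],
    ![0, 0, 1, 0, 1, 1],
    ![0, 0, 0, 0, 0, 1],
    ![0, 0, 0, 0, 1, 0],
    ![0, 0, 1, 0, 0, 0],
    ![0, 0, 1, 1, 0, 0],
    ![1, 2, 2, 1, 1, 2],
    ![0, 0, 0, 0, 1, 1],
    ![0, 1, 1, 0, 1, 1],
    ![0, 1, 1, 1, 1, 1],
    ![1, 1, 2, 1, 0, 1],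
    ![0, 1, 2, 1, 1, 2],
    ![1, 1, 1, 1, 0, 0],
    ![1, 1, 1, 0, 0, 0],
    ![0, 1, 0, 0, 0, 0],
    ![0, 1, 1, 0, 0, 1],
    ![0, 1, 1, 1, 0, 1],
    ![1, 1, 2, 1, 1, 1],
    ![0, 1, 2, 1, 1, 1],
    ![1, 1, 1, 1, 0, 1],
    ![1, 1, 1, 0, 0, 1],
    ![1, 1, 0, 0, 0, 0],
    ![0, 1, 1, 0, 0, 0],
    ![0, 1, 1, 1, 0, 0],
    ![1, 1, 2, 1, 1, 2],
    ![0, 1, 2, 1, 0, 1],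
    ![1, 1, 1, 1, 1, 1],
    ![1, 1, 1, 0, 1, 1],
    ![1, 0, 0, 0, 0, 0]]

def signV : Fin 72 → Bool :=
  ![false, false, false, true, false, true, true, false, false, false, true, false, true, true, true, false, false, true, false, true, true, false, false, true, true, false, false, false, false, true, false, true, true, false, true, false, true, false, true, false, false, true, false, true, true, true, true, false, false, true, true, false, false, true, false, true, true, false, false, false, true, false, true, true, true, false, false, true, false, true, true, true]

def tblV : Fin 6 → Fin 72 → Fin 72 :=
  ![![71, 51, 52, 53, 54, 55, 56, 57, 58, 59, 60, 61, 62, 63, 64, 65, 66, 67, 68, 69, 70, 21, 22, 23, 24, 25, 26, 27, 28, 29, 30, 31, 32, 33, 34, 35, 36, 37, 38, 39, 40, 41, 42, 43, 44, 45, 46, 47, 48, 49, 50, 1, 2, 3, 4, 5, 6, 7, 8, 9, 10, 11, 12, 13, 14, 15, 16, 17, 18, 19, 20, 0],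
    ![0, 15, 16, 17, 18, 19, 20, 7, 8, 9, 10, 11, 12, 13, 14, 1, 2, 3, 4, 5, 6, 50, 42, 43, 44, 45, 46, 47, 48, 49, 30, 31, 32, 33, 34, 35, 36, 37, 38, 39, 40, 41, 22, 23, 24, 25, 26, 27, 28, 29, 21, 65, 66, 67, 68, 69, 70, 57, 58, 59, 60, 61, 62, 63, 64, 51, 52, 53, 54, 55, 56, 71],
    ![7, 1, 2, 3, 22, 23, 24, 0, 8, 9, 10, 30, 31, 32, 57, 15, 16, 17, 42, 43, 44, 21, 4, 5, 6, 25, 26, 51, 52, 53, 11, 12, 13, 33, 34, 35, 36, 37, 38, 58, 59, 60, 18, 19, 20, 45, 46, 65, 66, 67, 50, 27, 28, 29, 54, 55, 56, 14, 39, 40, 41, 61, 62, 63, 71, 47, 48, 49, 68, 69, 70, 64],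
    ![0, 1, 11, 12, 4, 5, 14, 15, 8, 18, 19, 2, 3, 13, 6, 7, 16, 17, 9, 10, 20, 27, 33, 34, 47, 25, 39, 21, 28, 29, 30, 31, 45, 22, 23, 35, 36, 48, 49, 26, 40, 41, 42, 43, 50, 32, 46, 24, 37, 38, 44, 51, 61, 62, 54, 55, 64, 65, 58, 68, 69, 52, 53, 63, 56, 57, 66, 67, 59, 60, 70, 71],
    ![0, 2, 1, 3, 4, 6, 5, 7, 9, 8, 10, 11, 13, 12, 14, 16, 15, 17, 18, 20, 19, 21, 22, 24, 23, 25, 26, 28, 27, 29, 30, 32, 31, 35, 37, 33, 38, 34, 36, 40, 39, 41, 42, 44, 43, 45, 46, 48, 47, 49, 50, 52, 51, 53, 54, 56, 55, 57, 59, 58, 60, 61, 63, 62, 64, 66, 65, 67, 68, 70, 69, 71],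
    ![0, 1, 3, 2, 5, 4, 6, 7, 8, 10, 9, 12, 11, 13, 14, 15, 17, 16, 19, 18, 20, 21, 23, 22, 24, 25, 26, 27, 29, 28, 31, 30, 32, 34, 33, 36, 35, 38, 37, 39, 41, 40, 43, 42, 44, 45, 46, 47, 49, 48, 50, 51, 53, 52, 55, 54, 56, 57, 58, 60, 59, 62, 61, 63, 64, 65, 67, 66, 69, 68, 70, 71]]

def rtIdx : Fin 6 → Fin 72 := ![71, 50, 14, 24, 34, 35]

def ΔE6 : Fin 6 → (Fin 6 → ℤ) := ![rt 0, rt 2, rt 3, rt 4, θE6, -βE6]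

set_option maxRecDepth 100000
set_option maxHeartbeats 4000000

lemma hclosed : ∀ (i : Fin 6) (m : Fin 72), srefl i (rootsV m) = rootsV (tblV i m) := by
  decide

lemma hrt : ∀ k : Fin 6, rt k = rootsV (rtIdx k) := by decide

lemma hok : ∀ m : Fin 72, rootsV m =
    if signV m then ∑ j, (coeffV m j : ℤ) • ΔE6 j else -∑ j, (coeffV m j : ℤ) • ΔE6 j := by
  decide

lemma stable : ∀ f ∈ Submonoid.closure (Set.range srefl),
    ∀ m, ∃ m', f (rootsV m) = rootsV m' := by
  intro f hf
  induction hf using Submonoid.closure_induction with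
  | mem f hf =>
    obtain ⟨i, rfl⟩ := hf
    exact fun m => ⟨tblV i m, hclosed i m⟩
  | one => exact fun m => ⟨m, rfl⟩
  | mul f g hf hg hfi hgi =>
    intro m
    obtain ⟨m1, h1⟩ := hgi m
    obtain ⟨m2, h2⟩ := hfi m1
    exact ⟨m2, by show f (g _) = _; rw [h1, h2]⟩

lemma root_mem (v : Fin 6 → ℤ) (hv : IsRoot v) : ∃ m, v = rootsV m := by
  obtain ⟨f, hf, k, rfl⟩ := hv
  obtain ⟨m', hm'⟩ := stable f hf (rtIdx k)
  exact ⟨m', by rw [← hrt k] at hm'; exact hm'⟩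

lemma beta_isRoot : IsRoot βE6 := by
  refine ⟨srefl 3 * (srefl 4 * (srefl 5 * (srefl 2 * (srefl 3 * (srefl 4 *
      (srefl 1 * (srefl 3 * srefl 2))))))), ?_, 0, by decide⟩
  refine mul_mem (Submonoid.subset_closure ⟨3, rfl⟩) ?_
  refine mul_mem (Submonoid.subset_closure ⟨4, rfl⟩) ?_
  refine mul_mem (Submonoid.subset_closure ⟨5, rfl⟩) ?_
  refine mul_mem (Submonoid.subset_closure ⟨2, rfl⟩) ?_
  refine mul_mem (Submonoid.subset_closure ⟨3, rfl⟩) ?_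
  refine mul_mem (Submonoid.subset_closure ⟨4, rfl⟩) ?_
  refine mul_mem (Submonoid.subset_closure ⟨1, rfl⟩) ?_
  exact mul_mem (Submonoid.subset_closure ⟨3, rfl⟩) (Submonoid.subset_closure ⟨2, rfl⟩)

def MZ : Matrix (Fin 6) (Fin 6) ℤ :=
  !![2, 0, -1, 0, 0, 0;
    -1, 0, 2, -1, 0, 0;
    0, -1, -1, 2, -1, 0;
    0, 0, 0, -1, 2, -1;
    0, 1, 0, 0, 0, 0;
    0, 1, 0, -1, 0, 0]

lemma detMZ : MZ.det = 3 := by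
  simp [MZ, Matrix.det_succ_row_zero, Fin.sum_univ_succ]
  decide

lemma linIndE6 : LinearIndependent ℚ fun k => fun i => ((ΔE6 k i : ℤ) : ℚ) := by
  have hz : Matrix.of ΔE6 = MZ := by decide
  have h : (fun k => fun i => ((ΔE6 k i : ℤ) : ℚ)) =
      fun k => ((Int.castRingHom ℚ).mapMatrix MZ) k := by
    rw [← hz]; rfl
  rw [h]
  refine Matrix.linearIndependent_rows_iff_isUnit.mpr ((Matrix.isUnit_iff_isUnit_det _).mpr ?_)
  rw [← RingHom.map_det, detMZ]
  norm_num

theorem stmt8 :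
    βE6 = rt 0 + rt 1 + 2 • rt 2 + 3 • rt 3 + 2 • rt 4 + rt 5 ∧
    IsPositiveRoot βE6 ∧
    IsBase ![rt 0, rt 2, rt 3, rt 4, θE6, -βE6] := by
  refine ⟨by decide, ⟨beta_isRoot, ![1, 1, 2, 3, 2, 1], by decide⟩, linIndE6, ?_⟩
  intro v hv
  obtain ⟨m, rfl⟩ := root_mem v hv
  have h := hok m
  rcases hs : signV m with _ | _
  · rw [hs] at h
    right
    exact ⟨coeffV m, by simpa [ΔE6] using h⟩
  · rw [hs] at h
    left
    exact ⟨coeffV m, by simpa [ΔE6] using h⟩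
end

section
/- Let X be the root lattice of B_ℓ viewed inside its weight lattice with fundamental weights ϖ_1,…,ϖ_ℓ and simple roots γ_1,…,γ_ℓ (γ_ℓ short). Suppose λ, μ are dominant elements of X with μ ≺ λ a cover relation in the dominance order such that γ_ℓ occurs in λ − μ. Then either (1) λ − μ = γ_ℓ and ⟨μ, γ̌_ℓ⟩ ≠ 0, or (2) λ − μ = γ_i + γ_{i+1} + ⋯ + γ_ℓ for some 1 ≤ i ≤ ℓ and μ = Σ_{k<i} a_k ϖ_k with a_k ∈ ℤ_{≥0}. -/
/-!
STATEMENT 15: Refinement of Stembridge's theorem for `B_ℓ`.  We work in the standard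
`ε`-coordinates: the root lattice `X` of `B_ℓ` is `ℤ^ℓ`, the simple roots are
`γ_i = e_i − e_{i+1}` (`i < ℓ`) and `γ_ℓ = e_ℓ` (short), the relevant fundamental
weights are `ϖ_k = e_1 + ⋯ + e_k` (`k < ℓ`), a vector is dominant iff its coordinates
are weakly decreasing and nonnegative, and `μ ⪯ λ` iff `λ − μ` is a nonnegative
integral combination of the `γ_i`.  If `μ ≺ λ` is a cover relation among dominant
elements of `X` in which `γ_ℓ` occurs, then either
(1) `λ − μ = γ_ℓ` and `⟨μ, γ̌_ℓ⟩ ≠ 0` (`γ̌_ℓ = 2 e_ℓ`), or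
(2) `λ − μ = γ_i + ⋯ + γ_ℓ` for some `i` and `μ = Σ_{k<i} a_k ϖ_k`, `a_k ∈ ℕ`.
-/

/-- The simple root `γ_{i+1}` of `B_ℓ` in `ε`-coordinates
(`e_i − e_{i+1}` for `i+1 < ℓ`, and `e_ℓ` for the last index). -/
def γB (ℓ : ℕ) (i : Fin ℓ) : Fin ℓ → ℤ :=
  fun j => (if j = i then 1 else 0) - (if (j : ℕ) = (i : ℕ) + 1 then 1 else 0)

/-- The (non-spin) fundamental weight `ϖ_{k+1} = e_1 + ⋯ + e_{k+1}` of `B_ℓ`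
(valid for `k+1 < ℓ`; only these occur below). -/
def ϖB (ℓ : ℕ) (k : Fin ℓ) : Fin ℓ → ℤ := fun j => if (j : ℕ) ≤ (k : ℕ) then 1 else 0

/-- The coroot `γ̌_ℓ = 2 e_ℓ` of the short simple root. -/
def coγℓ (ℓ : ℕ) : Fin ℓ → ℤ := fun j => if (j : ℕ) + 1 = ℓ then 2 else 0

/-- Dominance in `ε`-coordinates: weakly decreasing and nonnegative. -/
def IsDomB (ℓ : ℕ) (lam : Fin ℓ → ℤ) : Prop :=
  (∀ i j : Fin ℓ, i ≤ j → lam j ≤ lam i) ∧ ∀ i, 0 ≤ lam i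

/-- The dominance order `μ ⪯ λ`. -/
def DomLE (ℓ : ℕ) (μ lam : Fin ℓ → ℤ) : Prop :=
  ∃ c : Fin ℓ → ℕ, lam - μ = ∑ j, (c j : ℤ) • γB ℓ j

/-- `μ ≺ λ` is a cover relation in the dominance order on dominant elements. -/
def CoversB (ℓ : ℕ) (μ lam : Fin ℓ → ℤ) : Prop :=
  DomLE ℓ μ lam ∧ μ ≠ lam ∧
    ¬∃ ν : Fin ℓ → ℤ, IsDomB ℓ ν ∧ DomLE ℓ μ ν ∧ DomLE ℓ ν lam ∧ ν ≠ μ ∧ ν ≠ lam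

lemma coordgamma {ℓ : ℕ} (c : Fin ℓ → ℤ) (k : Fin ℓ) :
    (∑ j, c j • γB ℓ j) k
      = c k - (if hk : (k : ℕ) = 0 then 0 else c ⟨(k:ℕ)-1, by omega⟩) := by
  rw [Finset.sum_apply]
  simp only [Pi.smul_apply]
  have h1 : ∀ j : Fin ℓ, c j • γB ℓ j k
      = (if k = j then c j else 0) - (if (k:ℕ) = (j:ℕ)+1 then c j else 0) := by
    intro j
    simp only [γB, smul_eq_mul]
    split_ifs <;> ring
  rw [Finset.sum_congr rfl (fun j _ => h1 j), Finset.sum_sub_distrib]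
  congr 1
  · simp
  · split_ifs with hk
    · apply Finset.sum_eq_zero
      intro j _
      rw [if_neg]; omega
    · rw [Finset.sum_eq_single (⟨(k:ℕ)-1, by omega⟩ : Fin ℓ)]
      · rw [if_pos]; simp; omega
      · intro j _ hj
        rw [if_neg]
        intro h
        exact hj (Fin.ext (by simp at h ⊢; omega))
      · simp

lemma single_diff {ℓ : ℕ} (a b : ℕ) (ha : a < b) (hb : b ≤ ℓ) (haℓ : a < ℓ) :
    ∑ j : Fin ℓ, (((if a ≤ (j:ℕ) ∧ (j:ℕ) < b then 1 else 0 : ℕ) : ℤ)) • γB ℓ j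
      = fun k : Fin ℓ => (if (k:ℕ) = a then 1 else 0) - (if (k:ℕ) = b then 1 else 0) := by
  funext k
  rw [coordgamma]
  by_cases hk : (k:ℕ) = 0
  · rw [dif_pos hk]
    push_cast
    split_ifs <;> omega
  · rw [dif_neg hk]
    push_cast
    have : (k:ℕ) - 1 < ℓ := by omega
    split_ifs <;> simp_all <;> omega

lemma domle_single {ℓ : ℕ} (μ ν : Fin ℓ → ℤ) (a b : ℕ) (ha : a < b) (hb : b ≤ ℓ) (haℓ : a < ℓ)
    (h : ∀ k : Fin ℓ, ν k - μ k
        = (if (k:ℕ) = a then 1 else 0) - (if (k:ℕ) = b then 1 else 0)) :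
    DomLE ℓ μ ν := by
  refine ⟨fun j => if a ≤ (j:ℕ) ∧ (j:ℕ) < b then 1 else 0, ?_⟩
  rw [single_diff a b ha hb haℓ]
  funext k
  rw [Pi.sub_apply, h k]

lemma adj_mono {ℓ : ℕ} (f : Fin ℓ → ℤ)
    (h : ∀ n (hn : n + 1 < ℓ), f ⟨n+1, hn⟩ ≤ f ⟨n, by omega⟩) :
    ∀ p q : Fin ℓ, p ≤ q → f q ≤ f p := by
  have key : ∀ t, ∀ p q : Fin ℓ, (q:ℕ) = (p:ℕ) + t → f q ≤ f p := by
    intro t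
    induction t with
    | zero => intro p q hq; have : q = p := Fin.ext (by omega); rw [this]
    | succ t ih =>
      intro p q hq
      have h1 : (p:ℕ) + t + 1 < ℓ := by omega
      have : q = ⟨(p:ℕ) + t + 1, h1⟩ := Fin.ext (by simp; omega)
      rw [this]
      exact le_trans (h ((p:ℕ)+t) h1) (ih p ⟨(p:ℕ)+t, by omega⟩ rfl)
  intro p q hpq
  exact key ((q:ℕ) - (p:ℕ)) p q (by rw [Fin.le_def] at hpq; omega)


lemma add_box_dom {ℓ : ℕ} (μ : Fin ℓ → ℤ) (hdμ : IsDomB ℓ μ) (p : ℕ) (hpℓ : p < ℓ)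
    (hstrict : ∀ h : p - 1 < ℓ, 0 < p → μ ⟨p, hpℓ⟩ + 1 ≤ μ ⟨p-1, h⟩) :
    IsDomB ℓ (fun k => μ k + if (k:ℕ) = p then 1 else 0) := by
  constructor
  · apply adj_mono
    intro n hn
    show μ ⟨n+1, hn⟩ + (if n+1 = p then 1 else 0)
      ≤ μ ⟨n, by omega⟩ + (if n = p then 1 else 0)
    have hmono := hdμ.1 ⟨n, by omega⟩ ⟨n+1, hn⟩ (Fin.mk_le_mk.mpr (by omega))
    by_cases h1 : n + 1 = p
    · rw [if_pos h1, if_neg (show ¬ n = p by omega)]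
      have e1 : (⟨n+1, hn⟩ : Fin ℓ) = ⟨p, hpℓ⟩ := Fin.ext h1
      have e2 : (⟨n, by omega⟩ : Fin ℓ) = ⟨p-1, by omega⟩ := Fin.ext (show n = p-1 by omega)
      rw [e1, e2]
      have := hstrict (by omega) (by omega)
      omega
    · rw [if_neg h1]
      by_cases h2 : n = p
      · rw [if_pos h2]; omega
      · rw [if_neg h2]; omega
  · intro k
    show 0 ≤ μ k + (if (k:ℕ) = p then 1 else 0)
    have := hdμ.2 k
    split_ifs <;> omega

lemma sub_box_dom {ℓ : ℕ} (lam : Fin ℓ → ℤ) (hd : IsDomB ℓ lam) (p : ℕ) (hpℓ : p < ℓ)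
    (h1 : 1 ≤ lam ⟨p, hpℓ⟩) (h2 : ∀ h : p+1 < ℓ, lam ⟨p+1, h⟩ + 1 ≤ lam ⟨p, hpℓ⟩) :
    IsDomB ℓ (fun k => lam k - if (k:ℕ) = p then 1 else 0) := by
  constructor
  · apply adj_mono
    intro n hn
    show lam ⟨n+1, hn⟩ - (if n+1 = p then 1 else 0)
      ≤ lam ⟨n, by omega⟩ - (if n = p then 1 else 0)
    have hmono := hd.1 ⟨n, by omega⟩ ⟨n+1, hn⟩ (Fin.mk_le_mk.mpr (by omega))
    by_cases h3 : n = p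
    · rw [if_pos h3, if_neg (show ¬ n+1 = p by omega)]
      have e1 : (⟨n+1, hn⟩ : Fin ℓ) = ⟨p+1, by omega⟩ := Fin.ext (show n+1 = p+1 by omega)
      have e2 : (⟨n, by omega⟩ : Fin ℓ) = ⟨p, hpℓ⟩ := Fin.ext h3
      rw [e1, e2]
      have := h2 (by omega)
      omega
    · rw [if_neg h3]
      by_cases h4 : n + 1 = p
      · rw [if_pos h4]; omega
      · rw [if_neg h4]; omega
  · intro k
    show 0 ≤ lam k - (if (k:ℕ) = p then 1 else 0)
    have hk := hd.2 k
    by_cases h : (k:ℕ) = p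
    · have e : k = ⟨p, hpℓ⟩ := Fin.ext h
      rw [if_pos h, e]
      omega
    · rw [if_neg h]
      omega

set_option maxHeartbeats 2000000 in
theorem stmt15 (ℓ : ℕ) (hℓ : 0 < ℓ) (lam μ : Fin ℓ → ℤ)
    (hdlam : IsDomB ℓ lam) (hdμ : IsDomB ℓ μ)
    (hcov : CoversB ℓ μ lam)
    -- `γ_ℓ` occurs in `λ − μ`:
    (hshort : ∃ c : Fin ℓ → ℕ,
      lam - μ = ∑ j, (c j : ℤ) • γB ℓ j ∧ 0 < c ⟨ℓ - 1, by omega⟩) :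
    (lam - μ = γB ℓ ⟨ℓ - 1, by omega⟩ ∧ (∑ j, μ j * coγℓ ℓ j) ≠ 0) ∨
    (∃ i : Fin ℓ,
      lam - μ = ∑ j ∈ Finset.univ.filter (fun j => i ≤ j), γB ℓ j ∧
      ∃ a : Fin ℓ → ℕ,
        μ = ∑ k ∈ Finset.univ.filter (fun k => k < i), (a k : ℤ) • ϖB ℓ k) := by
  classical
  obtain ⟨c, hc, hcpos⟩ := hshort
  have rel : ∀ k : Fin ℓ, lam k - μ k
      = ((c k : ℤ)) - (if hk : (k:ℕ) = 0 then 0 else ((c ⟨(k:ℕ)-1, by omega⟩ : ℤ))) := by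
    intro k
    have h := congrFun hc k
    rw [Pi.sub_apply] at h
    rw [h, coordgamma (fun j => ((c j : ℤ))) k]
  have rel0 : lam ⟨0, hℓ⟩ - μ ⟨0, hℓ⟩ = (c ⟨0, hℓ⟩ : ℤ) := by
    have := rel ⟨0, hℓ⟩
    rwa [dif_pos rfl, sub_zero] at this
  have relS : ∀ n (hn : n+1 < ℓ),
      lam ⟨n+1, hn⟩ - μ ⟨n+1, hn⟩ = (c ⟨n+1, hn⟩ : ℤ) - (c ⟨n, by omega⟩ : ℤ) := by
    intro n hn
    have := rel ⟨n+1, hn⟩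
    rwa [dif_neg (show ¬ n+1 = 0 by omega)] at this
  -- λ is not identically zero
  have hlamne : ∃ n, ∃ hn : n < ℓ, 0 < lam ⟨n, hn⟩ := by
    by_contra hno
    push_neg at hno
    have hz : ∀ n (hn : n < ℓ), lam ⟨n, hn⟩ = 0 := fun n hn =>
      le_antisymm (hno n hn) (hdlam.2 _)
    have hcle : ∀ n (hn : n < ℓ), (c ⟨n, hn⟩ : ℤ) ≤ 0 := by
      intro n
      induction n with
      | zero =>
        intro hn
        have h1 := rel0
        have h2 := hdμ.2 ⟨0, hℓ⟩
        have h3 := hz 0 hℓ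
        omega
      | succ n ih =>
        intro hn
        have h1 := relS n hn
        have h2 := hz (n+1) hn
        have h3 := hdμ.2 ⟨n+1, hn⟩
        have h4 := ih (by omega)
        omega
    have := hcle (ℓ-1) (by omega)
    omega
  -- i = largest index with lam > 0
  obtain ⟨i, hiℓ, hipos0, hlz⟩ :
      ∃ i, ∃ hi : i < ℓ, 0 < lam ⟨i, hi⟩ ∧ ∀ m (hm : m < ℓ), i < m → lam ⟨m, hm⟩ = 0 := by
    set P : ℕ → Prop := fun n => ∃ hn : n < ℓ, 0 < lam ⟨n, hn⟩ with hP
    obtain ⟨n₀, hn₀ℓ, hn₀⟩ := hlamne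
    have hspec : P (Nat.findGreatest P (ℓ-1)) :=
      Nat.findGreatest_spec (m := n₀) (by omega) ⟨hn₀ℓ, hn₀⟩
    obtain ⟨hiℓ, hipos⟩ := hspec
    refine ⟨Nat.findGreatest P (ℓ-1), hiℓ, hipos, ?_⟩
    intro m hm him
    have hng := Nat.findGreatest_is_greatest (P := P) him (by omega)
    rw [hP] at hng
    simp only [not_exists] at hng
    have h1 := hng hm
    have h2 := hdlam.2 ⟨m, hm⟩
    omega
  -- c ≥ 1 from i onwards
  have hc1 : ∀ n (hn : n < ℓ), i ≤ n → 1 ≤ c ⟨n, hn⟩ := by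
    have key : ∀ t, t ≤ ℓ-1-i → 1 ≤ c ⟨ℓ-1-t, by omega⟩ := by
      intro t
      induction t with
      | zero =>
        intro _
        have e : (⟨ℓ-1-0, by omega⟩ : Fin ℓ) = ⟨ℓ-1, by omega⟩ := Fin.ext (show ℓ-1-0 = ℓ-1 by omega)
        rw [e]; exact hcpos
      | succ t ih =>
        intro ht
        have hn1 : (ℓ-1-(t+1)) + 1 < ℓ := by omega
        have h1 := relS (ℓ-1-(t+1)) hn1
        have h2 : lam ⟨ℓ-1-(t+1)+1, hn1⟩ = 0 := hlz _ hn1 (by omega)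
        have h3 := hdμ.2 ⟨ℓ-1-(t+1)+1, hn1⟩
        have h4 : 1 ≤ c ⟨ℓ-1-(t+1)+1, hn1⟩ := by
          have e : (⟨ℓ-1-t, by omega⟩ : Fin ℓ) = ⟨ℓ-1-(t+1)+1, hn1⟩ :=
            Fin.ext (show ℓ-1-t = ℓ-1-(t+1)+1 by omega)
          rw [← e]; exact ih (by omega)
        omega
    intro n hn hin
    have e : (⟨ℓ-1-(ℓ-1-n), by omega⟩ : Fin ℓ) = ⟨n, hn⟩ := Fin.ext (show ℓ-1-(ℓ-1-n) = n by omega)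
    have := key (ℓ-1-n) (by omega)
    rwa [e] at this
  set I : Fin ℓ := ⟨i, hiℓ⟩ with hIdef
  have hipos : 0 < lam I := hipos0
  -- the intermediate element ν = λ - e_i
  set ν : Fin ℓ → ℤ := fun k => lam k - (if (k:ℕ) = i then 1 else 0) with hνdef
  have hνdom : IsDomB ℓ ν := by
    apply sub_box_dom lam hdlam i hiℓ
    · exact hipos0
    · intro h
      have h5 : 0 < lam ⟨i, hiℓ⟩ := hipos0
      have := hlz (i+1) h (by omega)
      omega
  have hνμ : DomLE ℓ μ ν := by
    refine ⟨fun j => c j - (if i ≤ (j:ℕ) then 1 else 0), ?_⟩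
    have e1 : ∑ j : Fin ℓ, ((c j - (if i ≤ (j:ℕ) then 1 else 0) : ℕ) : ℤ) • γB ℓ j
        = (∑ j : Fin ℓ, (c j : ℤ) • γB ℓ j)
          - ∑ j : Fin ℓ, (((if i ≤ (j:ℕ) ∧ (j:ℕ) < ℓ then 1 else 0 : ℕ)) : ℤ) • γB ℓ j := by
      rw [← Finset.sum_sub_distrib]
      apply Finset.sum_congr rfl
      intro j _
      rw [← sub_smul]
      congr 1
      have hj := j.isLt
      by_cases h : i ≤ (j:ℕ)
      · have h1 : 1 ≤ c j := by
          have := hc1 (j:ℕ) j.isLt h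
          simpa using this
        rw [if_pos h, if_pos ⟨h, hj⟩]
        push_cast [Nat.cast_sub h1]
        ring
      · rw [if_neg h, if_neg (fun hh => h hh.1)]
        simp
    rw [e1, single_diff i ℓ hiℓ le_rfl hiℓ, ← hc]
    funext k
    have hkl : ¬ (k:ℕ) = ℓ := by omega
    show ν k - μ k = (lam k - μ k) - ((if (k:ℕ) = i then 1 else 0) - (if (k:ℕ) = ℓ then 1 else 0))
    simp only [hνdef]
    rw [if_neg hkl]
    ring
  have hνlam : DomLE ℓ ν lam := by
    apply domle_single ν lam i ℓ hiℓ le_rfl hiℓ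
    intro k
    simp only [hνdef]
    rw [if_neg (show ¬ (k:ℕ) = ℓ by omega)]
    ring
  have hνI : ν I = lam I - 1 := by
    show lam I - (if i = i then 1 else 0) = lam I - 1
    rw [if_pos rfl]
  have hνne : ν ≠ lam := by
    intro h
    have h2 := congrFun h I
    omega
  have hmain : ν = μ := by
    by_contra hne
    exact hcov.2.2 ⟨ν, hνdom, hνμ, hνlam, hne, hνne⟩
  have heq : ∀ k : Fin ℓ, μ k = lam k - (if (k:ℕ) = i then 1 else 0) := by
    intro k
    have := congrFun hmain k
    simp only [hνdef] at this
    omega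
  have hlamI : lam I = μ I + 1 := by
    have := heq I
    rw [if_pos (show (I:ℕ) = i from rfl)] at this
    omega
  have hμoff : ∀ k : Fin ℓ, (k:ℕ) ≠ i → μ k = lam k := by
    intro k hk
    have := heq k
    rw [if_neg hk] at this
    omega
  have hμhigh : ∀ k : Fin ℓ, i < (k:ℕ) → μ k = 0 := by
    intro k hk
    rw [hμoff k (by omega)]
    have := hlz (k:ℕ) k.isLt hk
    simpa using this
  clear hc1 relS rel0 rel hνμ hνlam hνdom hνne hνI hmain
  by_cases hcase : i = ℓ - 1 ∧ μ I ≠ 0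
  · -- CASE (1)
    left
    obtain ⟨hi1, hμI⟩ := hcase
    constructor
    · funext k
      rw [Pi.sub_apply]
      show lam k - μ k = (if k = ⟨ℓ-1, by omega⟩ then 1 else 0) - (if (k:ℕ) = (ℓ-1) + 1 then 1 else 0)
      rw [if_neg (show ¬ (k:ℕ) = (ℓ-1)+1 by omega)]
      have := heq k
      by_cases hk : (k:ℕ) = i
      · rw [if_pos (Fin.ext (show (k:ℕ) = ℓ-1 by omega))]
        omega
      · rw [if_neg (fun hh => hk (by rw [hh]; show ℓ-1 = i; omega))]
        omega
    · have hsum : ∑ j, μ j * coγℓ ℓ j = μ ⟨ℓ-1, by omega⟩ * 2 := by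
        rw [Finset.sum_eq_single (⟨ℓ-1, by omega⟩ : Fin ℓ)]
        · show μ _ * (if (ℓ-1) + 1 = ℓ then 2 else 0) = _
          rw [if_pos (by omega)]
        · intro j _ hj
          show μ j * (if (j:ℕ) + 1 = ℓ then 2 else 0) = 0
          rw [if_neg (fun hh => hj (Fin.ext (show (j:ℕ) = ℓ-1 by omega)))]
          ring
        · intro h
          exact absurd (Finset.mem_univ _) h
      rw [hsum]
      have hμl : μ ⟨ℓ-1, by omega⟩ = μ I := by
        congr 1
        exact Fin.ext (show ℓ-1 = i by omega)
      rw [hμl]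
      intro h0
      omega
  · -- CASE (2)
    have hμI0 : μ I = 0 := by
      by_cases hi1 : i = ℓ - 1
      · by_contra hne
        exact hcase ⟨hi1, hne⟩
      · have hilt : i < ℓ - 1 := by omega
        by_contra hne
        have hμIpos : 1 ≤ μ I := by
          have := hdμ.2 I
          omega
        by_cases hex : ∃ p, i < p ∧ ∃ hp : p < ℓ, μ ⟨p, hp⟩ < μ I
        · -- there is a later strictly smaller entry: add a box there
          obtain ⟨p, ⟨hip, hpℓ, hplt⟩, hpmin⟩ :
              ∃ p, (i < p ∧ ∃ hp : p < ℓ, μ ⟨p, hp⟩ < μ I) ∧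
                ∀ m, m < p → ¬(i < m ∧ ∃ hm : m < ℓ, μ ⟨m, hm⟩ < μ I) :=
            ⟨Nat.find hex, Nat.find_spec hex, fun m hm => Nat.find_min hex hm⟩
          have hmin : ∀ m, m < p → i < m → ∀ hm : m < ℓ, μ I ≤ μ ⟨m, hm⟩ := by
            intro m hmp him hm
            have h := hpmin m hmp
            push_neg at h
            exact h him hm
          have hp1 : ∀ h : p - 1 < ℓ, μ I ≤ μ ⟨p-1, h⟩ := by
            intro hh
            by_cases h : p - 1 = i
            · have e : (⟨p-1, hh⟩ : Fin ℓ) = I := Fin.ext h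
              rw [e]
            · exact hmin (p-1) (by omega) (by omega) _
          set ν2 : Fin ℓ → ℤ := fun k => μ k + (if (k:ℕ) = p then 1 else 0) with hν2def
          have hν2dom : IsDomB ℓ ν2 := by
            apply add_box_dom μ hdμ p hpℓ
            intro h _
            have := hp1 h
            omega
          have hν2μ : DomLE ℓ μ ν2 := by
            apply domle_single μ ν2 p ℓ hpℓ le_rfl hpℓ
            intro k
            show μ k + (if (k:ℕ) = p then 1 else 0) - μ k = _
            rw [if_neg (show ¬ (k:ℕ) = ℓ by omega)]
            ring
          have hν2lam : DomLE ℓ ν2 lam := by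
            apply domle_single ν2 lam i p hip (by omega) hiℓ
            intro k
            show lam k - (μ k + (if (k:ℕ) = p then 1 else 0)) = _
            rw [heq k]
            ring
          have hv2p : ν2 ⟨p, hpℓ⟩ = μ ⟨p, hpℓ⟩ + 1 := by
            show μ ⟨p, hpℓ⟩ + (if p = p then 1 else 0) = _
            rw [if_pos rfl]
          have hv2I : ν2 I = μ I := by
            show μ I + (if i = p then 1 else 0) = μ I
            rw [if_neg (show ¬ i = p by omega)]
            ring
          have hν2neμ : ν2 ≠ μ := by
            intro h
            have := congrFun h ⟨p, hpℓ⟩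
            omega
          have hν2nelam : ν2 ≠ lam := by
            intro h
            have := congrFun h I
            omega
          exact hcov.2.2 ⟨ν2, hν2dom, hν2μ, hν2lam, hν2neμ, hν2nelam⟩
        · -- all later entries equal μ I ≥ 1 : remove the last box of λ
          push_neg at hex
          have hlast0 : ℓ - 1 < ℓ := by omega
          have hμl1 : 1 ≤ μ ⟨ℓ-1, hlast0⟩ := le_trans hμIpos (hex (ℓ-1) (by omega) hlast0)
          set ν3 : Fin ℓ → ℤ := fun k => lam k - (if (k:ℕ) = ℓ-1 then 1 else 0) with hν3def
          have hlast : ℓ - 1 < ℓ := by omega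
          have hν3dom : IsDomB ℓ ν3 := by
            apply sub_box_dom lam hdlam (ℓ-1) hlast
            · have h2 : μ ⟨ℓ-1, hlast⟩ = lam ⟨ℓ-1, hlast⟩ :=
                hμoff ⟨ℓ-1, hlast⟩ (show ℓ-1 ≠ i by omega)
              have h3 : 1 ≤ μ ⟨ℓ-1, hlast⟩ := hμl1
              omega
            · intro h
              omega
          have hν3μ : DomLE ℓ μ ν3 := by
            apply domle_single μ ν3 i (ℓ-1) hilt (by omega) hiℓ
            intro k
            show lam k - (if (k:ℕ) = ℓ-1 then 1 else 0) - μ k = _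
            rw [heq k]
            ring
          have hν3lam : DomLE ℓ ν3 lam := by
            apply domle_single ν3 lam (ℓ-1) ℓ (by omega) le_rfl (by omega)
            intro k
            show lam k - (lam k - (if (k:ℕ) = ℓ-1 then 1 else 0)) = _
            rw [if_neg (show ¬ (k:ℕ) = ℓ by omega)]
            ring
          have hv3I : ν3 I = lam I := by
            show lam I - (if i = ℓ-1 then 1 else 0) = lam I
            rw [if_neg (show ¬ i = ℓ-1 by omega)]
            ring
          have hv3l : ν3 ⟨ℓ-1, hlast⟩ = lam ⟨ℓ-1, hlast⟩ - 1 := by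
            show lam ⟨ℓ-1, hlast⟩ - (if ℓ-1 = ℓ-1 then 1 else 0) = _
            rw [if_pos rfl]
          have hν3neμ : ν3 ≠ μ := by
            intro h
            have := congrFun h I
            omega
          have hν3nelam : ν3 ≠ lam := by
            intro h
            have := congrFun h ⟨ℓ-1, hlast⟩
            omega
          exact hcov.2.2 ⟨ν3, hν3dom, hν3μ, hν3lam, hν3neμ, hν3nelam⟩
    -- assemble case (2)
    have hz : ∀ k : Fin ℓ, i ≤ (k:ℕ) → μ k = 0 := by
      intro k hk
      rcases Nat.eq_or_lt_of_le hk with h | h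
      · have e : k = I := Fin.ext h.symm
        rw [e]; exact hμI0
      · exact hμhigh k h
    right
    refine ⟨I, ?_, ?_⟩
    · have e2 : ∑ j ∈ Finset.univ.filter (fun j => I ≤ j), γB ℓ j
          = ∑ j : Fin ℓ, (((if i ≤ (j:ℕ) ∧ (j:ℕ) < ℓ then 1 else 0 : ℕ)):ℤ) • γB ℓ j := by
        rw [Finset.sum_filter]
        apply Finset.sum_congr rfl
        intro j _
        by_cases h : I ≤ j
        · rw [if_pos h, if_pos ⟨Fin.le_def.mp h, j.isLt⟩]
          push_cast
          rw [one_smul]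
        · rw [if_neg h, if_neg (fun hh => h (Fin.le_def.mpr hh.1))]
          push_cast
          rw [zero_smul]
      rw [e2, single_diff i ℓ hiℓ le_rfl hiℓ]
      funext k
      rw [Pi.sub_apply]
      rw [if_neg (show ¬ (k:ℕ) = ℓ by omega)]
      have := heq k
      omega
    · refine ⟨fun k => (μ k - (if h : (k:ℕ)+1 < ℓ then μ ⟨(k:ℕ)+1, h⟩ else 0)).toNat, ?_⟩
      set F : ℕ → ℤ := fun n => if h : n < ℓ then μ ⟨n, h⟩ else 0 with hF
      have hacast : ∀ k : Fin ℓ,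
          (((μ k - (if h : (k:ℕ)+1 < ℓ then μ ⟨(k:ℕ)+1, h⟩ else 0)).toNat : ℕ) : ℤ)
            = F (k:ℕ) - F ((k:ℕ)+1) := by
        intro k
        have hFk : F (k:ℕ) = μ k := by
          rw [hF]
          simp only []
          rw [dif_pos k.isLt]
        have hnn : 0 ≤ μ k - (if h : (k:ℕ)+1 < ℓ then μ ⟨(k:ℕ)+1, h⟩ else 0) := by
          by_cases h : (k:ℕ)+1 < ℓ
          · rw [dif_pos h]
            have := hdμ.1 k ⟨(k:ℕ)+1, h⟩ (Fin.le_def.mpr (show (k:ℕ) ≤ (k:ℕ)+1 by omega))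
            omega
          · rw [dif_neg h]
            have := hdμ.2 k
            omega
        rw [Int.toNat_of_nonneg hnn, hFk]
      funext j
      rw [Finset.sum_apply]
      have e3 : ∀ k : Fin ℓ, (if k < I then
            ((((μ k - (if h : (k:ℕ)+1 < ℓ then μ ⟨(k:ℕ)+1, h⟩ else 0)).toNat : ℕ) : ℤ) • ϖB ℓ k) j
          else 0)
          = (if (k:ℕ) < i ∧ (j:ℕ) ≤ (k:ℕ) then F (k:ℕ) - F ((k:ℕ)+1) else 0) := by
        intro k
        by_cases h1 : k < I
        · rw [if_pos h1]
          have h1' : (k:ℕ) < i := Fin.lt_def.mp h1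
          rw [Pi.smul_apply, smul_eq_mul, hacast k]
          show (F (k:ℕ) - F ((k:ℕ)+1)) * (if (j:ℕ) ≤ (k:ℕ) then 1 else 0) = _
          by_cases h2 : (j:ℕ) ≤ (k:ℕ)
          · rw [if_pos h2, if_pos ⟨h1', h2⟩]; ring
          · rw [if_neg h2, if_neg (fun hh => h2 hh.2)]; ring
        · rw [if_neg h1, if_neg (fun hh => h1 (Fin.lt_def.mpr hh.1))]
      rw [Finset.sum_filter]
      rw [Finset.sum_congr rfl (fun k _ => e3 k)]
      have e4 : ∑ k : Fin ℓ, (if (k:ℕ) < i ∧ (j:ℕ) ≤ (k:ℕ) then F (k:ℕ) - F ((k:ℕ)+1) else 0)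
          = ∑ n ∈ Finset.range ℓ, (if n < i ∧ (j:ℕ) ≤ n then F n - F (n+1) else 0) :=
        Fin.sum_univ_eq_sum_range (fun n => if n < i ∧ (j:ℕ) ≤ n then F n - F (n+1) else 0) ℓ
      rw [e4]
      have e5 : ∀ n, (if n < i ∧ (j:ℕ) ≤ n then F n - F (n+1) else 0)
          = (if n ∈ Finset.Ico (j:ℕ) i then F n - F (n+1) else 0) := by
        intro n
        apply if_congr _ rfl rfl
        rw [Finset.mem_Ico]
        tauto
      rw [Finset.sum_congr rfl (fun n _ => e5 n), Finset.sum_ite_mem]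
      have e6 : Finset.range ℓ ∩ Finset.Ico (j:ℕ) i = Finset.Ico (j:ℕ) i := by
        apply Finset.inter_eq_right.mpr
        intro n hn
        rw [Finset.mem_Ico] at hn
        rw [Finset.mem_range]
        omega
      rw [e6]
      by_cases hji : (j:ℕ) < i
      · rw [Finset.sum_Ico_eq_sub _ (le_of_lt hji), Finset.sum_range_sub' F,
          Finset.sum_range_sub' F]
        have hFj : F (j:ℕ) = μ j := by
          rw [hF]; simp only []; rw [dif_pos j.isLt]
        have hFi : F i = 0 := by
          rw [hF]; simp only []; rw [dif_pos hiℓ]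
          exact hμI0
        rw [hFj, hFi]
        ring
      · rw [Finset.Ico_eq_empty (by omega), Finset.sum_empty]
        exact hz j (by omega)
end
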